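/- Let d ≥ 1, let ι be a nonempty finite index type, let c : ι → ℝ with c α > 0 for all α, and let a, b : ι → EuclideanSpace ℝ (Fin d) with ‖a α‖ = 1 and ‖b α‖ = 1 for all α. Let λ, μ ∈ ℝ with μ > 0 and λ + μ > 0, and set ν := λ/(2(λ + μ)). Define A : Matrix (Fin d) (Fin d) ℝ by A k l := −∑_{α} c α · (a α) k · (b α) l, assume A is symmetric (A = Aᵀ), set γ := −∑_{α} c α · ⟪a α, b α⟫, and set K := (λ + μ) • A + (μ·γ) • (1 : Matrix (Fin d) (Fin d) ℝ). If −⟪a α, b α⟫ > 1/(3 − 4ν) for every α ∈ ι, then K is positive-definite. -/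

import Mathlib

open RealInnerProductSpace Matrix

theorem stmt_11 (d : ℕ) (hd : 1 ≤ d) {ι : Type*} [Fintype ι] [Nonempty ι]
    (c : ι → ℝ) (hc : ∀ α, 0 < c α)
    (a b : ι → EuclideanSpace ℝ (Fin d))
    (ha : ∀ α, ‖a α‖ = 1) (hb : ∀ α, ‖b α‖ = 1)
    (lam mu : ℝ) (hmu : 0 < mu) (hlm : 0 < lam + mu)
    (ν : ℝ) (hν : ν = lam / (2 * (lam + mu)))
    (A : Matrix (Fin d) (Fin d) ℝ)
    (hA : ∀ k l : Fin d, A k l = -∑ α, c α * (a α) k * (b α) l)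
    (hAsym : A = Aᵀ)
    (γ : ℝ) (hγ : γ = -∑ α, c α * ⟪a α, b α⟫)
    (K : Matrix (Fin d) (Fin d) ℝ)
    (hK : K = (lam + mu) • A + (mu * γ) • (1 : Matrix (Fin d) (Fin d) ℝ))
    (hangle : ∀ α, -⟪a α, b α⟫ > 1 / (3 - 4 * ν)) :
    K.PosDef := by
  have hl3m : 0 < lam + 3 * mu := by linarith
  have hinner : ∀ (u v : EuclideanSpace ℝ (Fin d)), ⟪u, v⟫ = ∑ i, u i * v i := by
    intro u v; simp [PiLp.inner_apply, RCLike.inner_apply]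
    exact Finset.sum_congr rfl fun i _ => mul_comm _ _
  have hnorm1 : ∀ (u : EuclideanSpace ℝ (Fin d)), ‖u‖ = 1 → ∑ i, u i * u i = 1 := by
    intro u hu
    have h1 : ⟪u, u⟫ = 1 := by rw [real_inner_self_eq_norm_sq, hu]; norm_num
    rw [hinner] at h1; exact h1
  -- angle condition in cleaned form
  have hκ : ∀ α, (lam + mu) < (-⟪a α, b α⟫) * (lam + 3 * mu) := by
    intro α
    have h := hangle α
    have h34 : (3 - 4 * ν) = (lam + 3 * mu) / (lam + mu) := by
      rw [hν]; field_simp; ring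
    rw [h34, one_div_div] at h
    calc lam + mu = ((lam + mu) / (lam + 3 * mu)) * (lam + 3 * mu) := by rw [div_mul_cancel₀ _ hl3m.ne']
      _ < (-⟪a α, b α⟫) * (lam + 3 * mu) := mul_lt_mul_of_pos_right h hl3m
  rw [Matrix.posDef_iff_dotProduct_mulVec]
  constructor
  · -- Hermitian
    rw [Matrix.IsHermitian, hK]
    ext i j
    have h2 : A j i = A i j := by nth_rewrite 1 [hAsym]; rfl
    simp [Matrix.conjTranspose_apply, Matrix.add_apply, Matrix.one_apply, h2, eq_comm]
  · intro x hx
    set N : ℝ := ∑ k, x k * x k with hNdef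
    have hNpos : 0 < N := by
      have hne : ∃ k, x k ≠ 0 := by
        by_contra h; push_neg at h; exact hx (funext h)
      obtain ⟨k, hk⟩ := hne
      exact Finset.sum_pos' (fun i _ => mul_self_nonneg (x i))
        ⟨k, Finset.mem_univ k, mul_self_pos.mpr hk⟩
    -- quadratic form of A
    have swap : ∀ (f : Fin d → Fin d → ι → ℝ),
        ∑ k, ∑ l, ∑ α, f k l α = ∑ α, ∑ k, ∑ l, f k l α := by
      intro f
      have h1 : ∀ k, ∑ l, ∑ α, f k l α = ∑ α, ∑ l, f k l α := fun k => Finset.sum_comm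
      simp_rw [h1]
      exact Finset.sum_comm
    have hAq : x ⬝ᵥ (A *ᵥ x)
        = ∑ α, -(c α * ((∑ k, a α k * x k) * (∑ l, b α l * x l))) := by
      calc x ⬝ᵥ (A *ᵥ x) = ∑ k, ∑ l, ∑ α, -(x k * (c α * a α k * b α l * x l)) := by
            simp only [dotProduct, Matrix.mulVec, hA, neg_mul, Finset.sum_mul, Finset.mul_sum,
              Finset.sum_neg_distrib, mul_neg]
        _ = ∑ α, ∑ k, ∑ l, -(x k * (c α * a α k * b α l * x l)) := swap _
        _ = ∑ α, -(c α * ((∑ k, a α k * x k) * (∑ l, b α l * x l))) := by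
            refine Finset.sum_congr rfl fun α _ => ?_
            rw [Finset.sum_mul_sum]
            simp only [Finset.mul_sum, ← Finset.sum_neg_distrib]
            exact Finset.sum_congr rfl fun k _ => Finset.sum_congr rfl fun l _ => by ring
    -- full quadratic form
    have hKq : x ⬝ᵥ (K *ᵥ x)
        = ∑ α, (c α * (-((lam + mu) * ((∑ k, a α k * x k) * (∑ l, b α l * x l)))
            + mu * (c α)⁻¹ * (c α * (-⟪a α, b α⟫)) * N)) := by
      have h1 : x ⬝ᵥ (K *ᵥ x) = (lam + mu) * (x ⬝ᵥ (A *ᵥ x)) + (mu * γ) * N := by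
        rw [hK, Matrix.add_mulVec, Matrix.smul_mulVec, Matrix.smul_mulVec,
          Matrix.one_mulVec, dotProduct_add, dotProduct_smul, dotProduct_smul]
        simp only [smul_eq_mul, dotProduct, ← hNdef]
      have hgam : ∀ n : ℝ, (mu * γ) * n = ∑ α, (mu * (c α * (-⟪a α, b α⟫)) * n) := by
        intro n
        rw [hγ, ← Finset.sum_neg_distrib, Finset.mul_sum, Finset.sum_mul]
        exact Finset.sum_congr rfl fun α _ => by ring
      rw [h1, hAq, hgam N, Finset.mul_sum, ← Finset.sum_add_distrib]
      refine Finset.sum_congr rfl fun α _ => ?_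
      have hcne : c α ≠ 0 := (hc α).ne'
      field_simp
    rw [star_trivial, hKq]
    -- each summand is positive
    refine Finset.sum_pos (fun α _ => ?_) Finset.univ_nonempty
    have hcα := hc α
    set s : ℝ := ∑ k, a α k * x k with hs
    set t : ℝ := ∑ l, b α l * x l with ht
    set κ : ℝ := -⟪a α, b α⟫ with hκdef
    have hab : ∑ i, a α i * b α i = -κ := by
      rw [hκdef, hinner]; ring
    have hcne : c α ≠ 0 := hcα.ne'
    rw [show mu * (c α)⁻¹ * (c α * κ) * N = mu * κ * N by field_simp]
    -- Cauchy-Schwarz for s + t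
    have hCS : (s + t) ^ 2 ≤ (2 - 2 * κ) * N := by
      have h1 : (∑ i, (a α i + b α i) * x i) ^ 2
          ≤ (∑ i, (a α i + b α i) ^ 2) * ∑ i, x i ^ 2 :=
        Finset.sum_mul_sq_le_sq_mul_sq Finset.univ _ _
      have h2 : ∑ i, (a α i + b α i) * x i = s + t := by
        rw [hs, ht, ← Finset.sum_add_distrib]
        exact Finset.sum_congr rfl fun i _ => by ring
      have h3 : ∑ i, (a α i + b α i) ^ 2 = 2 - 2 * κ := by
        have haa := hnorm1 (a α) (ha α)
        have hbb := hnorm1 (b α) (hb α)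
        have hexp : ∀ i : Fin d, (a α i + b α i) ^ 2
            = a α i * a α i + 2 * (a α i * b α i) + b α i * b α i := fun i => by ring
        rw [Finset.sum_congr rfl fun i _ => hexp i]
        rw [Finset.sum_add_distrib, Finset.sum_add_distrib, haa, hbb, ← Finset.mul_sum, hab]
        ring
      have h4 : ∑ i, x i ^ 2 = N := by
        rw [hNdef]; exact Finset.sum_congr rfl fun i _ => (sq (x i)).symm ▸ by ring
      rw [h2, h3, h4] at h1
      exact h1
    have hκα : lam + mu < κ * (lam + 3 * mu) := hκ α
    have hmain : 0 < -((lam + mu) * (s * t)) + mu * κ * N := by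
      nlinarith [sq_nonneg (s - t), mul_pos hNpos hl3m, hCS, mul_lt_mul_of_pos_right hκα hNpos]
    exact mul_pos hcα hmain
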